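/- arXiv:0807.0204 — 2 statements merged into one kernel-verified Lean document; each statement's English description precedes it below -/
import Mathlib

section
/- Let H be an n×n complex matrix that is lower bidiagonal, i.e., H_{ij} = 0 unless i = j or i = j + 1, and let ρ ≥ 0 be a real number. Then det(I_n + ρ·H·Hᴴ) ≥ ∏_{i=1}^{n−1} (1 + ρ·|H_{i+1,i}|²). In particular, the mutual information log det(I_n + ρ·H·Hᴴ) is lower bounded by that of the channel H_l obtained by retaining only the first subdiagonal of H. -/
open Matrix

section Aux

lemma tridiag_det_rec {R : Type*} [CommRing R] {n : ℕ}
    (M : Matrix (Fin (n+2)) (Fin (n+2)) R)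
    (h1 : ∀ j : Fin (n+2), (j : ℕ) + 2 ≤ n + 1 → M (Fin.last (n+1)) j = 0)
    (h2 : ∀ i : Fin (n+2), (i : ℕ) + 2 ≤ n + 1 → M i (Fin.last (n+1)) = 0) :
    M.det = M (Fin.last (n+1)) (Fin.last (n+1))
        * (M.submatrix Fin.castSucc Fin.castSucc).det
      - M (Fin.last (n+1)) (Fin.castSucc (Fin.last n))
        * M (Fin.castSucc (Fin.last n)) (Fin.last (n+1))
        * (M.submatrix (Fin.castSucc ∘ Fin.castSucc) (Fin.castSucc ∘ Fin.castSucc)).det := by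
  rw [det_succ_row M (Fin.last (n+1))]
  rw [Fin.sum_univ_castSucc, Fin.sum_univ_castSucc]
  have hz : ∀ j : Fin n, (-1 : R) ^ ((Fin.last (n+1) : ℕ) + ((j.castSucc.castSucc : Fin (n+2)) : ℕ))
      * M (Fin.last (n+1)) j.castSucc.castSucc
      * det (M.submatrix (Fin.last (n+1)).succAbove (j.castSucc.castSucc).succAbove) = 0 := by
    intro j
    rw [h1 _ (by simp), mul_zero, zero_mul]
  rw [Finset.sum_eq_zero (fun j _ => hz j), zero_add]
  have hsa : (Fin.last (n+1)).succAbove = Fin.castSucc := Fin.succAbove_last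
  have hsign2 : (-1 : R) ^ ((Fin.last (n+1) : ℕ) + ((Fin.last (n+1)) : ℕ)) = 1 := by
    simp [Fin.val_last]
  have hsign1 : (-1 : R) ^ ((Fin.last (n+1) : ℕ) + (((Fin.last n).castSucc : Fin (n+2)) : ℕ)) = -1 := by
    simp [Fin.val_last]
  rw [hsign1, hsign2, hsa]
  set N : Matrix (Fin (n+1)) (Fin (n+1)) R :=
    M.submatrix Fin.castSucc ((Fin.last n).castSucc.succAbove) with hN
  have hNlast : ∀ i : Fin n, N i.castSucc (Fin.last n) = 0 := by
    intro i
    have : ((Fin.last n).castSucc).succAbove (Fin.last n) = Fin.last (n+1) := by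
      rw [Fin.succAbove_castSucc_of_le _ _ le_rfl, Fin.succ_last]
    simp only [hN, submatrix_apply, this]
    exact h2 _ (by simp)
  have hNdet : N.det = M (Fin.castSucc (Fin.last n)) (Fin.last (n+1))
      * (M.submatrix (Fin.castSucc ∘ Fin.castSucc) (Fin.castSucc ∘ Fin.castSucc)).det := by
    rw [det_succ_column N (Fin.last n), Fin.sum_univ_castSucc]
    have hz2 : ∀ i : Fin n, (-1 : R) ^ (((i.castSucc : Fin (n+1)) : ℕ) + ((Fin.last n : Fin (n+1)) : ℕ))
        * N i.castSucc (Fin.last n)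
        * det (N.submatrix (i.castSucc).succAbove (Fin.last n).succAbove) = 0 := by
      intro i
      rw [hNlast i, mul_zero, zero_mul]
    rw [Finset.sum_eq_zero (fun i _ => hz2 i), zero_add]
    have hsign3 : (-1 : R) ^ ((Fin.last n : ℕ) + ((Fin.last n) : ℕ)) = 1 := by
      simp [Fin.val_last]
    have hNval : N (Fin.last n) (Fin.last n) = M (Fin.castSucc (Fin.last n)) (Fin.last (n+1)) := by
      simp only [hN, submatrix_apply]
      congr 1
      rw [Fin.succAbove_castSucc_of_le _ _ le_rfl, Fin.succ_last]
    have hNsub : N.submatrix (Fin.last n).succAbove (Fin.last n).succAbove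
        = M.submatrix (Fin.castSucc ∘ Fin.castSucc) (Fin.castSucc ∘ Fin.castSucc) := by
      rw [Fin.succAbove_last, hN, submatrix_submatrix]
      ext i j
      simp only [submatrix_apply, Function.comp_apply]
      congr 1
      exact Fin.succAbove_castSucc_of_lt _ _ j.castSucc_lt_last
    rw [hsign3, hNval, hNsub, one_mul]
  rw [hNdet]
  ring

/-- bidiagonal predicate -/
def Bd {n : ℕ} (H : Matrix (Fin n) (Fin n) ℂ) : Prop :=
  ∀ i j : Fin n, (i : ℕ) ≠ (j : ℕ) → (i : ℕ) ≠ (j : ℕ) + 1 → H i j = 0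

noncomputable def Dd (ρ : ℝ) {n : ℕ} (H : Matrix (Fin n) (Fin n) ℂ) : ℝ :=
  ((1 : Matrix (Fin n) (Fin n) ℂ) + (ρ : ℂ) • (H * Hᴴ)).det.re

def trunc {n : ℕ} (H : Matrix (Fin (n+1)) (Fin (n+1)) ℂ) : Matrix (Fin n) (Fin n) ℂ :=
  H.submatrix Fin.castSucc Fin.castSucc

noncomputable def Pp (ρ : ℝ) {n : ℕ} (H : Matrix (Fin n) (Fin n) ℂ) : ℝ :=
  ∏ i : Fin (n - 1),
    (1 + ρ * ‖H ⟨(i : ℕ) + 1, Nat.add_lt_of_lt_sub i.isLt⟩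
        ⟨(i : ℕ), Nat.lt_of_lt_of_le i.isLt (Nat.sub_le n 1)⟩‖ ^ 2)

noncomputable def Ee (ρ : ℝ) : {n : ℕ} → Matrix (Fin n) (Fin n) ℂ → ℝ
  | 0, _ => 1
  | (m+1), H => Dd ρ H - ρ * ‖H (Fin.last m) (Fin.last m)‖ ^ 2 * Dd ρ (trunc H)

lemma Bd_trunc {n : ℕ} {H : Matrix (Fin (n+1)) (Fin (n+1)) ℂ} (h : Bd H) : Bd (trunc H) := by
  intro i j hij hij1
  exact h _ _ (by simpa using hij) (by simpa using hij1)

lemma one_le_Pp (ρ : ℝ) (hρ : 0 ≤ ρ) {n : ℕ} (H : Matrix (Fin n) (Fin n) ℂ) : 1 ≤ Pp ρ H := by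
  unfold Pp
  calc (1:ℝ) = ∏ _i : Fin (n-1), 1 := by simp
  _ ≤ _ := by
    apply Finset.prod_le_prod (fun i _ => zero_le_one)
    intro i _
    have := mul_nonneg hρ (sq_nonneg (‖H ⟨(i : ℕ) + 1, Nat.add_lt_of_lt_sub i.isLt⟩
        ⟨(i : ℕ), Nat.lt_of_lt_of_le i.isLt (Nat.sub_le n 1)⟩‖))
    linarith

/-- the product of entries vanishes when indices are far apart -/
lemma mulHermitian_offdiag {n : ℕ} {H : Matrix (Fin n) (Fin n) ℂ} (h : Bd H)
    {i j : Fin n} (hij : (j : ℕ) + 2 ≤ i ∨ (i : ℕ) + 2 ≤ j) : (H * Hᴴ) i j = 0 := by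
  rw [mul_apply]
  apply Finset.sum_eq_zero
  intro k _
  rw [conjTranspose_apply]
  by_cases h1 : (i : ℕ) = (k : ℕ) ∨ (i : ℕ) = (k : ℕ) + 1
  · rw [h j k (by rcases hij with h'|h' <;> rcases h1 with h1|h1 <;> omega)
      (by rcases hij with h'|h' <;> rcases h1 with h1|h1 <;> omega), star_zero, mul_zero]
  · push_neg at h1
    rw [h i k h1.1 h1.2, zero_mul]

lemma M_submatrix (ρ : ℝ) {n : ℕ} {H : Matrix (Fin (n+1)) (Fin (n+1)) ℂ} (h : Bd H) :
    ((1 : Matrix (Fin (n+1)) (Fin (n+1)) ℂ) + (ρ : ℂ) • (H * Hᴴ)).submatrix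
        Fin.castSucc Fin.castSucc
      = (1 : Matrix (Fin n) (Fin n) ℂ) + (ρ : ℂ) • (trunc H * (trunc H)ᴴ) := by
  ext i j
  simp only [submatrix_apply, Matrix.add_apply, Matrix.smul_apply, smul_eq_mul]
  congr 1
  · by_cases hij : i = j
    · subst hij; simp
    · rw [one_apply_ne (fun hc => hij (Fin.castSucc_inj.mp hc)), one_apply_ne hij]
  · congr 1
    rw [mul_apply, mul_apply, Fin.sum_univ_castSucc]
    have hlast : H i.castSucc (Fin.last n) * Hᴴ (Fin.last n) j.castSucc = 0 := by
      rw [h i.castSucc (Fin.last n) (by simp; omega) (by simp; omega), zero_mul]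
    rw [hlast, add_zero]
    apply Finset.sum_congr rfl
    intro k _
    simp [trunc, conjTranspose_apply]

end Aux

section Rec
variable (ρ : ℝ) {m : ℕ}

lemma entry_ll {H : Matrix (Fin (m+2)) (Fin (m+2)) ℂ} (h : Bd H) :
    ((1 : Matrix (Fin (m+2)) (Fin (m+2)) ℂ) + (ρ : ℂ) • (H * Hᴴ)) (Fin.last (m+1)) (Fin.last (m+1))
      = ((1 + ρ * (Complex.normSq (H (Fin.last (m+1)) ((Fin.last m).castSucc))
          + Complex.normSq (H (Fin.last (m+1)) (Fin.last (m+1)))) : ℝ) : ℂ) := by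
  simp only [Matrix.add_apply, Matrix.smul_apply, smul_eq_mul, one_apply_eq]
  rw [mul_apply, Fin.sum_univ_castSucc, Fin.sum_univ_castSucc]
  rw [Finset.sum_eq_zero (f := fun k : Fin m =>
      H (Fin.last (m+1)) k.castSucc.castSucc * Hᴴ k.castSucc.castSucc (Fin.last (m+1)))
    (fun k _ => by
      show H (Fin.last (m+1)) k.castSucc.castSucc * Hᴴ k.castSucc.castSucc (Fin.last (m+1)) = 0
      rw [h (Fin.last (m+1)) k.castSucc.castSucc (by simp; omega) (by simp; omega), zero_mul])]
  simp only [conjTranspose_apply, zero_add, Complex.star_def]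
  rw [Complex.mul_conj, Complex.mul_conj]
  push_cast
  ring

lemma entry_lp {H : Matrix (Fin (m+2)) (Fin (m+2)) ℂ} (h : Bd H) :
    ((1 : Matrix (Fin (m+2)) (Fin (m+2)) ℂ) + (ρ : ℂ) • (H * Hᴴ)) (Fin.last (m+1)) ((Fin.last m).castSucc)
      * ((1 : Matrix (Fin (m+2)) (Fin (m+2)) ℂ) + (ρ : ℂ) • (H * Hᴴ)) ((Fin.last m).castSucc) (Fin.last (m+1))
      = ((ρ^2 * Complex.normSq (H (Fin.last (m+1)) ((Fin.last m).castSucc))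
          * Complex.normSq (H ((Fin.last m).castSucc) ((Fin.last m).castSucc)) : ℝ) : ℂ) := by
  have hne : Fin.last (m+1) ≠ (Fin.last m).castSucc := by
    simp [Fin.ext_iff]
  have e1 : (H * Hᴴ) (Fin.last (m+1)) ((Fin.last m).castSucc)
      = H (Fin.last (m+1)) ((Fin.last m).castSucc)
        * (starRingEnd ℂ) (H ((Fin.last m).castSucc) ((Fin.last m).castSucc)) := by
    rw [mul_apply]
    rw [Finset.sum_eq_single ((Fin.last m).castSucc)]
    · rw [conjTranspose_apply, Complex.star_def]
    · intro k _ hk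
      rw [conjTranspose_apply]
      by_cases hk1 : (k : ℕ) = m + 1
      · rw [h ((Fin.last m).castSucc) k (by simp only [Fin.coe_castSucc, Fin.val_last, hk1]; omega)
          (by simp only [Fin.coe_castSucc, Fin.val_last, hk1]; omega), star_zero, mul_zero]
      · have : (k : ℕ) < m := by
          have := k.isLt
          have : (k : ℕ) ≠ m := fun hc => hk (Fin.ext (by simp [hc]))
          omega
        rw [h (Fin.last (m+1)) k (by simp; omega) (by simp; omega), zero_mul]
    · intro hc
      exact absurd (Finset.mem_univ _) hc
  have e2 : (H * Hᴴ) ((Fin.last m).castSucc) (Fin.last (m+1))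
      = H ((Fin.last m).castSucc) ((Fin.last m).castSucc)
        * (starRingEnd ℂ) (H (Fin.last (m+1)) ((Fin.last m).castSucc)) := by
    rw [mul_apply]
    rw [Finset.sum_eq_single ((Fin.last m).castSucc)]
    · rw [conjTranspose_apply, Complex.star_def]
    · intro k _ hk
      rw [conjTranspose_apply]
      by_cases hk1 : (k : ℕ) = m + 1
      · rw [h ((Fin.last m).castSucc) k (by simp only [Fin.coe_castSucc, Fin.val_last, hk1]; omega)
          (by simp only [Fin.coe_castSucc, Fin.val_last, hk1]; omega), zero_mul]
      · have : (k : ℕ) < m := by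
          have := k.isLt
          have : (k : ℕ) ≠ m := fun hc => hk (Fin.ext (by simp [hc]))
          omega
        rw [h (Fin.last (m+1)) k (by simp; omega) (by simp; omega), star_zero, mul_zero]
    · intro hc
      exact absurd (Finset.mem_univ _) hc
  simp only [Matrix.add_apply, Matrix.smul_apply, smul_eq_mul, one_apply_ne hne, one_apply_ne (Ne.symm hne),
    zero_add, e1, e2]
  set b := H (Fin.last (m+1)) ((Fin.last m).castSucc)
  set a := H ((Fin.last m).castSucc) ((Fin.last m).castSucc)
  calc (ρ : ℂ) * (b * (starRingEnd ℂ) a) * ((ρ : ℂ) * (a * (starRingEnd ℂ) b))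
      = (ρ : ℂ)^2 * (b * (starRingEnd ℂ) b) * (a * (starRingEnd ℂ) a) := by ring
    _ = _ := by rw [Complex.mul_conj, Complex.mul_conj]; push_cast; ring

lemma Dd_rec {H : Matrix (Fin (m+2)) (Fin (m+2)) ℂ} (h : Bd H) :
    Dd ρ H = (1 + ρ * (Complex.normSq (H (Fin.last (m+1)) ((Fin.last m).castSucc))
          + Complex.normSq (H (Fin.last (m+1)) (Fin.last (m+1))))) * Dd ρ (trunc H)
      - (ρ^2 * Complex.normSq (H (Fin.last (m+1)) ((Fin.last m).castSucc))
          * Complex.normSq (H ((Fin.last m).castSucc) ((Fin.last m).castSucc)))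
        * Dd ρ (trunc (trunc H)) := by
  have h1 : ∀ j : Fin (m+2), (j : ℕ) + 2 ≤ m + 1 →
      ((1 : Matrix (Fin (m+2)) (Fin (m+2)) ℂ) + (ρ : ℂ) • (H * Hᴴ)) (Fin.last (m+1)) j = 0 := by
    intro j hj
    have hne : Fin.last (m+1) ≠ j := by
      simp only [Fin.ne_iff_vne, Fin.val_last]; omega
    rw [Matrix.add_apply, Matrix.smul_apply, smul_eq_mul, one_apply_ne hne,
      mulHermitian_offdiag h (Or.inl (by simp only [Fin.val_last]; omega)), mul_zero, add_zero]
  have h2 : ∀ i : Fin (m+2), (i : ℕ) + 2 ≤ m + 1 →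
      ((1 : Matrix (Fin (m+2)) (Fin (m+2)) ℂ) + (ρ : ℂ) • (H * Hᴴ)) i (Fin.last (m+1)) = 0 := by
    intro i hi
    have hne : i ≠ Fin.last (m+1) := by
      simp only [Fin.ne_iff_vne, Fin.val_last]; omega
    rw [Matrix.add_apply, Matrix.smul_apply, smul_eq_mul, one_apply_ne hne,
      mulHermitian_offdiag h (Or.inr (by simp only [Fin.val_last]; omega)), mul_zero, add_zero]
  have hrec := tridiag_det_rec _ h1 h2
  have hsub1 : ((1 : Matrix (Fin (m+2)) (Fin (m+2)) ℂ) + (ρ : ℂ) • (H * Hᴴ)).submatrix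
        Fin.castSucc Fin.castSucc
      = (1 : Matrix (Fin (m+1)) (Fin (m+1)) ℂ) + (ρ : ℂ) • (trunc H * (trunc H)ᴴ) :=
    M_submatrix ρ h
  have hsub2 : ((1 : Matrix (Fin (m+2)) (Fin (m+2)) ℂ) + (ρ : ℂ) • (H * Hᴴ)).submatrix
        (Fin.castSucc ∘ Fin.castSucc) (Fin.castSucc ∘ Fin.castSucc)
      = (1 : Matrix (Fin m) (Fin m) ℂ) + (ρ : ℂ) • (trunc (trunc H) * (trunc (trunc H))ᴴ) := by
    rw [← submatrix_submatrix, hsub1, M_submatrix ρ (Bd_trunc h)]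
  rw [hsub1, hsub2, entry_ll ρ h, entry_lp ρ h] at hrec
  have := congrArg Complex.re hrec
  simpa only [Complex.sub_re, Complex.re_ofReal_mul, Dd] using this

end Rec

section Main
variable (ρ : ℝ)

lemma Pp_rec {m : ℕ} (H : Matrix (Fin (m+2)) (Fin (m+2)) ℂ) :
    Pp ρ H = Pp ρ (trunc H)
      * (1 + ρ * ‖H (Fin.last (m+1)) ((Fin.last m).castSucc)‖ ^ 2) := by
  show (∏ i : Fin (m+1), (1 + ρ * ‖H ⟨(i : ℕ) + 1, by have := i.isLt; omega⟩
      ⟨(i : ℕ), by have := i.isLt; omega⟩‖ ^ 2)) = _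
  rw [Fin.prod_univ_castSucc]
  congr 1

lemma Ee_rec {m : ℕ} (H : Matrix (Fin (m+2)) (Fin (m+2)) ℂ) (h : Bd H) :
    Ee ρ H = Dd ρ (trunc H)
      + ρ * Complex.normSq (H (Fin.last (m+1)) ((Fin.last m).castSucc)) * Ee ρ (trunc H) := by
  show Dd ρ H - ρ * ‖H (Fin.last (m+1)) (Fin.last (m+1))‖ ^ 2 * Dd ρ (trunc H)
    = Dd ρ (trunc H) + ρ * Complex.normSq (H (Fin.last (m+1)) ((Fin.last m).castSucc))
      * (Dd ρ (trunc H) - ρ * ‖(trunc H) (Fin.last m) (Fin.last m)‖ ^ 2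
          * Dd ρ (trunc (trunc H)))
  have htt : (trunc H) (Fin.last m) (Fin.last m)
      = H ((Fin.last m).castSucc) ((Fin.last m).castSucc) := rfl
  rw [htt, Dd_rec ρ h, Complex.sq_norm, Complex.sq_norm]
  ring

lemma aux (hρ : 0 ≤ ρ) : ∀ n : ℕ, ∀ H : Matrix (Fin n) (Fin n) ℂ, Bd H →
    Pp ρ H ≤ Ee ρ H ∧ Ee ρ H ≤ Dd ρ H := by
  intro n
  induction n using Nat.strong_induction_on with
  | _ n ih =>
    match n with
    | 0 =>
      intro H _
      constructor
      · show Pp ρ H ≤ 1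
        have : Pp ρ H = 1 := by
          show (∏ _i : Fin 0, _) = (1:ℝ)
          simp
        rw [this]
      · show (1:ℝ) ≤ Dd ρ H
        show (1:ℝ) ≤ ((1 : Matrix (Fin 0) (Fin 0) ℂ) + (ρ : ℂ) • (H * Hᴴ)).det.re
        rw [det_fin_zero]
        norm_num
    | 1 =>
      intro H _
      have hD1 : Dd ρ (trunc H) = 1 := by
        show ((1 : Matrix (Fin 0) (Fin 0) ℂ) + _).det.re = 1
        rw [det_fin_zero]; norm_num
      have hD : Dd ρ H = 1 + ρ * Complex.normSq (H 0 0) := by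
        show ((1 : Matrix (Fin 1) (Fin 1) ℂ) + (ρ : ℂ) • (H * Hᴴ)).det.re = _
        rw [det_fin_one]
        simp only [Matrix.add_apply, Matrix.smul_apply, smul_eq_mul, one_apply_eq, mul_apply,
          Fin.sum_univ_one, conjTranspose_apply, Complex.star_def, Complex.mul_conj]
        simp
      have hP : Pp ρ H = 1 := by
        show (∏ _i : Fin 0, _) = (1:ℝ)
        simp
      have hE : Ee ρ H = Dd ρ H - ρ * ‖H 0 0‖ ^ 2 * Dd ρ (trunc H) := rfl
      constructor
      · rw [hP, hE, hD, hD1, Complex.sq_norm]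
        ring_nf
        try exact le_refl 1
      · rw [hE, hD1, Complex.sq_norm]
        have := mul_nonneg hρ (Complex.normSq_nonneg (H 0 0))
        linarith
    | (m+2) =>
      intro H hH
      have ih1 := ih (m+1) (by omega) (trunc H) (Bd_trunc hH)
      have hP1 := one_le_Pp ρ hρ (trunc H)
      have hD1 : 1 ≤ Dd ρ (trunc H) := le_trans hP1 (le_trans ih1.1 ih1.2)
      have hE1 : 1 ≤ Ee ρ (trunc H) := le_trans hP1 ih1.1
      set b2 := Complex.normSq (H (Fin.last (m+1)) ((Fin.last m).castSucc)) with hb2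
      have hb2n : 0 ≤ ρ * b2 := mul_nonneg hρ (Complex.normSq_nonneg _)
      constructor
      · rw [Pp_rec ρ H, Ee_rec ρ H hH, Complex.sq_norm, ← hb2]
        have h1 : Pp ρ (trunc H) * (1 + ρ * b2) = Pp ρ (trunc H) + ρ * b2 * Pp ρ (trunc H) := by
          ring
        rw [h1]
        have h2 : Pp ρ (trunc H) ≤ Dd ρ (trunc H) := le_trans ih1.1 ih1.2
        have h3 : ρ * b2 * Pp ρ (trunc H) ≤ ρ * b2 * Ee ρ (trunc H) :=
          mul_le_mul_of_nonneg_left ih1.1 hb2n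
        linarith
      · show Dd ρ H - ρ * ‖H (Fin.last (m+1)) (Fin.last (m+1))‖ ^ 2
            * Dd ρ (trunc H) ≤ Dd ρ H
        have : 0 ≤ ρ * ‖H (Fin.last (m+1)) (Fin.last (m+1))‖ ^ 2 * Dd ρ (trunc H) :=
          mul_nonneg (mul_nonneg hρ (sq_nonneg _)) (by linarith)
        linarith

end Main

/-- For a lower bidiagonal complex matrix `H` (nonzero entries only on the main diagonal
and first subdiagonal) and `ρ ≥ 0`, `det(I + ρ·H·Hᴴ) ≥ ∏_{i=1}^{n−1} (1 + ρ|H_{i+1,i}|²)`: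
the mutual information of `H` is lower bounded by that of its subdiagonal part. -/
theorem det_one_add_smul_mul_conjTranspose_ge_prod_subdiag
    (n : ℕ) (H : Matrix (Fin n) (Fin n) ℂ)
    (hH : ∀ i j : Fin n, (i : ℕ) ≠ (j : ℕ) → (i : ℕ) ≠ (j : ℕ) + 1 → H i j = 0)
    (ρ : ℝ) (hρ : 0 ≤ ρ) :
    ∏ i : Fin (n - 1),
        (1 + ρ * ‖H ⟨(i : ℕ) + 1, by have := i.isLt; omega⟩
            ⟨(i : ℕ), by have := i.isLt; omega⟩‖ ^ 2)
      ≤ ((1 : Matrix (Fin n) (Fin n) ℂ) + (ρ : ℂ) • (H * Hᴴ)).det.re := by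
  have := aux ρ hρ n H hH
  exact le_trans this.1 this.2
end

section
/- Let N ≥ 1 be an integer and let X₁, …, X_N be i.i.d. positive random variables such that Pr[X₁ ≤ ε] > 0 for every ε > 0 and lim_{ε→0⁺} log Pr[X₁ ≤ ε]/log ε = 1. Then for every real r with 0 < r < N, lim_{ρ→∞} log Pr[ Σ_{i=1}^N log(1 + ρ·Xᵢ) ≤ r·log ρ ] / log ρ = −(N − r). -/
open MeasureTheory ProbabilityTheory Filter

set_option maxHeartbeats 3200000 in
/-- Outage-exponent computation for a parallel fading channel with `N` i.i.d. fades: if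
each positive fade `Xᵢ` has near-zero probability exponent 1, then for `0 < r < N`,
`log Pr[∑ᵢ log(1+ρXᵢ) ≤ r·log ρ] / log ρ → −(N − r)` as `ρ → ∞`. -/
theorem parallel_channel_outage_exponent
    {Ω : Type*} [MeasurableSpace Ω] (μ : Measure Ω) [IsProbabilityMeasure μ]
    (N : ℕ) (hN : 1 ≤ N) (X : Fin N → Ω → ℝ)
    (hmeas : ∀ i, Measurable (X i))
    (hpos : ∀ i ω, 0 < X i ω)
    (hindep : iIndepFun X μ)
    (hident : ∀ i, IdentDistrib (X i) (X ⟨0, hN⟩) μ μ)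
    (hnonzero : ∀ ε : ℝ, 0 < ε → 0 < (μ {ω | X ⟨0, hN⟩ ω ≤ ε}).toReal)
    (hexp : Tendsto (fun ε : ℝ => Real.log ((μ {ω | X ⟨0, hN⟩ ω ≤ ε}).toReal) / Real.log ε)
      (nhdsWithin 0 (Set.Ioi 0)) (nhds 1))
    (r : ℝ) (hr0 : 0 < r) (hrN : r < N) :
    Tendsto (fun ρ : ℝ =>
        Real.log ((μ {ω | ∑ i, Real.log (1 + ρ * X i ω) ≤ r * Real.log ρ}).toReal)
          / Real.log ρ)
      atTop (nhds (-((N : ℝ) - r))) := by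
  have hNR : (1:ℝ) ≤ N := by exact_mod_cast hN
  have hNpos : (0:ℝ) < N := by linarith
  -- basic facts about the common CDF
  have hF1 : ∀ c : ℝ, (μ {ω | X ⟨0, hN⟩ ω ≤ c}).toReal ≤ 1 := by
    intro c
    have h : μ {ω | X ⟨0, hN⟩ ω ≤ c} ≤ 1 := prob_le_one
    simpa using ENNReal.toReal_mono ENNReal.one_ne_top h
  have hFi : ∀ (i : Fin N) (c : ℝ), μ {ω | X i ω ≤ c} = μ {ω | X ⟨0, hN⟩ ω ≤ c} := by
    intro i c
    exact (hident i).measure_mem_eq (measurableSet_Iic (a := c))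
  -- product formula from independence
  have hprod : ∀ c : Fin N → ℝ,
      (μ (⋂ i, {ω | X i ω ≤ c i})).toReal
        = ∏ i, (μ {ω | X ⟨0, hN⟩ ω ≤ c i}).toReal := by
    intro c
    have h1 : μ (⋂ i ∈ Finset.univ, X i ⁻¹' Set.Iic (c i))
        = ∏ i, μ (X i ⁻¹' Set.Iic (c i)) :=
      hindep.measure_inter_preimage_eq_mul Finset.univ (fun i _ => measurableSet_Iic)
    have h2 : (⋂ i, {ω | X i ω ≤ c i}) = ⋂ i ∈ Finset.univ, X i ⁻¹' Set.Iic (c i) := by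
      simp [Set.Iic]
    rw [h2, h1, ENNReal.toReal_prod]
    exact Finset.prod_congr rfl fun i _ => congrArg ENNReal.toReal (hFi i (c i))
  have hrel : -((N:ℝ) - r) = r - N := by ring
  rw [hrel, Metric.tendsto_nhds]
  intro ε hε
  -- choice of δ
  obtain ⟨δ, hδpos, hδ1, hδN⟩ : ∃ δ : ℝ, 0 < δ ∧ δ < 1 ∧ δ * N ≤ ε / 8 := by
    refine ⟨min (ε / (8 * (N + 1))) (1/2), lt_min (by positivity) (by norm_num),
      lt_of_le_of_lt (min_le_right _ _) (by norm_num), ?_⟩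
    have h1 : min (ε / (8 * (N + 1))) (1/2) ≤ ε / (8 * (N + 1)) := min_le_left _ _
    have h2 : min (ε / (8 * (N + 1))) (1/2) * (8 * (N + 1)) ≤ ε := by
      rw [← le_div_iff₀ (by positivity)]
      exact h1
    have h0 : (0:ℝ) ≤ min (ε / (8 * (N + 1))) (1/2) :=
      le_min (by positivity) (by norm_num)
    nlinarith [h0]
  -- ε₀ from the exponent hypothesis
  obtain ⟨ε₀, hε₀pos, hε₀⟩ := Metric.tendsto_nhdsWithin_nhds.mp hexp δ hδpos
  obtain ⟨ε₁, hε₁pos, hε₁le, hε₁le1⟩ : ∃ ε₁ : ℝ, 0 < ε₁ ∧ ε₁ ≤ ε₀ ∧ ε₁ ≤ 1 :=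
    ⟨min ε₀ 1, lt_min hε₀pos one_pos, min_le_left _ _, min_le_right _ _⟩
  -- the two-sided bound on F near 0
  have hFbound : ∀ x : ℝ, 0 < x → x < ε₁ →
      (μ {ω | X ⟨0, hN⟩ ω ≤ x}).toReal ≤ x ^ (1 - δ) ∧
        x ^ (1 + δ) ≤ (μ {ω | X ⟨0, hN⟩ ω ≤ x}).toReal := by
    intro x hx hx1
    have hxlt1 : x < 1 := lt_of_lt_of_le hx1 hε₁le1
    have hlogneg : Real.log x < 0 := Real.log_neg hx hxlt1
    have hd : dist (Real.log ((μ {ω | X ⟨0, hN⟩ ω ≤ x}).toReal) / Real.log x) 1 < δ := by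
      apply hε₀ (Set.mem_Ioi.mpr hx)
      rw [Real.dist_eq, sub_zero, abs_of_pos hx]
      exact lt_of_lt_of_le hx1 hε₁le
    rw [Real.dist_eq, abs_lt] at hd
    have hlogne : Real.log x ≠ 0 := ne_of_lt hlogneg
    set L : ℝ := Real.log ((μ {ω | X ⟨0, hN⟩ ω ≤ x}).toReal) with hLdef
    have hLq : L = (L / Real.log x) * Real.log x := by field_simp
    have hq1 : L ≤ (1 - δ) * Real.log x := by
      have h1 : 1 - δ ≤ L / Real.log x := by linarith [hd.1]
      have := mul_le_mul_of_nonpos_right h1 hlogneg.le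
      linarith [hLq ▸ this]
    have hq2 : (1 + δ) * Real.log x ≤ L := by
      have h2 : L / Real.log x ≤ 1 + δ := by linarith [hd.2]
      have := mul_le_mul_of_nonpos_right h2 hlogneg.le
      linarith [hLq ▸ this]
    have hFx : 0 < (μ {ω | X ⟨0, hN⟩ ω ≤ x}).toReal := hnonzero x hx
    constructor
    · have h := Real.exp_le_exp.mpr hq1
      rw [hLdef] at hq1
      have h' := Real.exp_le_exp.mpr hq1
      rw [Real.exp_log hFx] at h'
      rwa [Real.rpow_def_of_pos hx, mul_comm]
    · have h := Real.exp_le_exp.mpr hq2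
      rw [hLdef] at hq2
      have h' := Real.exp_le_exp.mpr hq2
      rw [Real.exp_log hFx] at h'
      rwa [Real.rpow_def_of_pos hx, mul_comm (Real.log x)]
  ------------------------------------------------------------------
  -- LOWER BOUND
  ------------------------------------------------------------------
  obtain ⟨a, ha_pos, ha_lt, ha1, hNa⟩ : ∃ a : ℝ, 0 < a ∧ a < r / N ∧ a < 1 ∧
      r - N - ε / 2 < (N:ℝ) * (a - 1) := by
    refine ⟨r / N - min (ε / (4 * N)) (r / (2 * N)), ?_, ?_, ?_, ?_⟩
    · have hmin_le2 : min (ε / (4 * N)) (r / (2 * N)) ≤ r / (2 * N) := min_le_right _ _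
      have hhalf : r / N - r / (2 * N) = r / (2 * N) := by field_simp; ring
      have h2 : 0 < r / (2 * N) := by positivity
      linarith
    · have hmin_pos : 0 < min (ε / (4 * N)) (r / (2 * N)) :=
        lt_min (by positivity) (by positivity)
      linarith
    · have hmin_pos : 0 < min (ε / (4 * N)) (r / (2 * N)) :=
        lt_min (by positivity) (by positivity)
      have hrN1 : r / N < 1 := (div_lt_one hNpos).mpr hrN
      linarith
    · have hmin_le1 : min (ε / (4 * N)) (r / (2 * N)) ≤ ε / (4 * N) := min_le_left _ _
      have h3 : (N:ℝ) * (ε / (4 * N)) = ε / 4 := by field_simp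
      have h4 : (N:ℝ) * min (ε / (4 * N)) (r / (2 * N)) ≤ ε / 4 := by
        calc (N:ℝ) * min (ε / (4 * N)) (r / (2 * N)) ≤ (N:ℝ) * (ε / (4 * N)) :=
              mul_le_mul_of_nonneg_left hmin_le1 hNpos.le
          _ = ε / 4 := h3
      have h5 : (N:ℝ) * (r / N - min (ε / (4 * N)) (r / (2 * N)) - 1)
          = r - N - N * min (ε / (4 * N)) (r / (2 * N)) := by
        field_simp; ring
      linarith
  have hrN1 : r / N < 1 := (div_lt_one hNpos).mpr hrN
  have hη : Tendsto (fun ρ : ℝ => ρ ^ (a - 1)) atTop (nhdsWithin 0 (Set.Ioi 0)) := by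
    rw [tendsto_nhdsWithin_iff]
    constructor
    · have h := tendsto_rpow_neg_atTop (show (0:ℝ) < 1 - a by linarith)
      simpa [neg_sub] using h
    · filter_upwards [eventually_gt_atTop (0:ℝ)] with ρ hρ
      exact Real.rpow_pos_of_pos hρ _
  have hℓ : Tendsto (fun ρ : ℝ => (N:ℝ) * (a - 1) *
      (Real.log ((μ {ω | X ⟨0, hN⟩ ω ≤ ρ ^ (a - 1)}).toReal) / Real.log (ρ ^ (a - 1))))
      atTop (nhds ((N:ℝ) * (a - 1))) := by
    have h := (hexp.comp hη).const_mul ((N:ℝ) * (a - 1))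
    simpa using h
  have hℓev : ∀ᶠ ρ : ℝ in atTop, r - N - ε / 2 < (N:ℝ) * (a - 1) *
      (Real.log ((μ {ω | X ⟨0, hN⟩ ω ≤ ρ ^ (a - 1)}).toReal) / Real.log (ρ ^ (a - 1))) :=
    hℓ.eventually (eventually_gt_nhds hNa)
  have hev2 : ∀ᶠ ρ : ℝ in atTop, (2:ℝ) ≤ ρ ^ (r / N - a) :=
    (tendsto_rpow_atTop (by linarith : (0:ℝ) < r / N - a)).eventually_ge_atTop 2
  have hmain_low : ∀ᶠ ρ : ℝ in atTop,
      0 < (μ {ω | ∑ i, Real.log (1 + ρ * X i ω) ≤ r * Real.log ρ}).toReal ∧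
      r - N - ε / 2 <
        Real.log ((μ {ω | ∑ i, Real.log (1 + ρ * X i ω) ≤ r * Real.log ρ}).toReal)
          / Real.log ρ := by
    filter_upwards [hℓev, hev2, eventually_gt_atTop (1:ℝ)] with ρ hℓρ h2ρ hρ1
    have hρ0 : (0:ℝ) < ρ := lt_trans one_pos hρ1
    have hlogρ : 0 < Real.log ρ := Real.log_pos hρ1
    have hηpos : 0 < ρ ^ (a - 1) := Real.rpow_pos_of_pos hρ0 _
    have hmul : ρ * ρ ^ (a - 1) = ρ ^ a := by
      have h := Real.rpow_add hρ0 1 (a - 1)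
      rw [Real.rpow_one] at h
      rw [← h]
      congr 1
      ring
    have hsplit : ρ ^ (r / N) = ρ ^ a * ρ ^ (r / N - a) := by
      rw [← Real.rpow_add hρ0]
      congr 1
      ring
    have h1a : (1:ℝ) ≤ ρ ^ a := by
      rw [← Real.rpow_zero ρ]
      exact Real.rpow_le_rpow_of_exponent_le hρ1.le ha_pos.le
    have h2a : (1:ℝ) + ρ * ρ ^ (a - 1) ≤ ρ ^ (r / N) := by
      rw [hmul, hsplit]
      nlinarith [Real.rpow_pos_of_pos hρ0 a]
    have hsub : (⋂ i, {ω | X i ω ≤ ρ ^ (a - 1)}) ⊆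
        {ω | ∑ i, Real.log (1 + ρ * X i ω) ≤ r * Real.log ρ} := by
      intro ω hω
      simp only [Set.mem_iInter, Set.mem_setOf_eq] at hω ⊢
      have hbound : ∀ i, Real.log (1 + ρ * X i ω) ≤ (r / N) * Real.log ρ := by
        intro i
        have h1 : 1 + ρ * X i ω ≤ 1 + ρ * ρ ^ (a - 1) := by
          nlinarith [hpos i ω, hω i]
        calc Real.log (1 + ρ * X i ω) ≤ Real.log (ρ ^ (r / N)) :=
              Real.log_le_log (by nlinarith [hpos i ω]) (le_trans h1 h2a)
          _ = (r / N) * Real.log ρ := Real.log_rpow hρ0 _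
      calc ∑ i, Real.log (1 + ρ * X i ω) ≤ ∑ _i : Fin N, (r / N) * Real.log ρ :=
            Finset.sum_le_sum (fun i _ => hbound i)
        _ = (N:ℝ) * ((r / N) * Real.log ρ) := by
            rw [Finset.sum_const, Finset.card_univ, Fintype.card_fin, nsmul_eq_mul]
        _ = r * Real.log ρ := by field_simp
    have hFη : 0 < (μ {ω | X ⟨0, hN⟩ ω ≤ ρ ^ (a - 1)}).toReal := hnonzero _ hηpos
    have hPge : (μ {ω | X ⟨0, hN⟩ ω ≤ ρ ^ (a - 1)}).toReal ^ N ≤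
        (μ {ω | ∑ i, Real.log (1 + ρ * X i ω) ≤ r * Real.log ρ}).toReal := by
      have hm : μ (⋂ i, {ω | X i ω ≤ ρ ^ (a - 1)}) ≤
          μ {ω | ∑ i, Real.log (1 + ρ * X i ω) ≤ r * Real.log ρ} := measure_mono hsub
      have h := ENNReal.toReal_mono (measure_ne_top μ _) hm
      rw [hprod (fun _ => ρ ^ (a - 1))] at h
      simpa [Finset.prod_const, Finset.card_univ] using h
    have hPpos : 0 < (μ {ω | ∑ i, Real.log (1 + ρ * X i ω) ≤ r * Real.log ρ}).toReal :=
      lt_of_lt_of_le (pow_pos hFη N) hPge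
    refine ⟨hPpos, ?_⟩
    have hlog : (N:ℝ) * Real.log ((μ {ω | X ⟨0, hN⟩ ω ≤ ρ ^ (a - 1)}).toReal) ≤
        Real.log ((μ {ω | ∑ i, Real.log (1 + ρ * X i ω) ≤ r * Real.log ρ}).toReal) := by
      have h := Real.log_le_log (pow_pos hFη N) hPge
      rwa [Real.log_pow] at h
    have hlogη : Real.log (ρ ^ (a - 1)) = (a - 1) * Real.log ρ := Real.log_rpow hρ0 _
    have hane : a - 1 ≠ 0 := by intro h; linarith [ha1]
    have hℓeq : (N:ℝ) * (a - 1) *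
        (Real.log ((μ {ω | X ⟨0, hN⟩ ω ≤ ρ ^ (a - 1)}).toReal) / Real.log (ρ ^ (a - 1)))
        = (N:ℝ) * Real.log ((μ {ω | X ⟨0, hN⟩ ω ≤ ρ ^ (a - 1)}).toReal) / Real.log ρ := by
      rw [hlogη]
      field_simp
    have hg : (N:ℝ) * Real.log ((μ {ω | X ⟨0, hN⟩ ω ≤ ρ ^ (a - 1)}).toReal) / Real.log ρ ≤
        Real.log ((μ {ω | ∑ i, Real.log (1 + ρ * X i ω) ≤ r * Real.log ρ}).toReal)
          / Real.log ρ := (div_le_div_iff_of_pos_right hlogρ).mpr hlog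
    rw [hℓeq] at hℓρ
    linarith
  ------------------------------------------------------------------
  -- UPPER BOUND
  ------------------------------------------------------------------
  obtain ⟨M, hM1, hMbig⟩ : ∃ M : ℕ, 1 ≤ M ∧ (N:ℝ) * r / M ≤ ε / 8 := by
    obtain ⟨M, hM⟩ := exists_nat_gt (max 1 (8 * N * r / ε))
    have hM1R : (1:ℝ) < M := lt_of_le_of_lt (le_max_left _ _) hM
    have hMR : 8 * (N:ℝ) * r / ε < M := lt_of_le_of_lt (le_max_right _ _) hM
    have hMpos : (0:ℝ) < M := lt_trans one_pos hM1R
    refine ⟨M, by exact_mod_cast hM1R.le, ?_⟩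
    rw [div_le_iff₀ hMpos]
    have h := (div_lt_iff₀ hε).mp hMR
    linarith
  have hMR : (1:ℝ) ≤ (M:ℝ) := by exact_mod_cast hM1
  have hMpos : (0:ℝ) < (M:ℝ) := lt_of_lt_of_le one_pos hMR
  set β : ℕ → ℝ := fun j => ((j:ℝ) + 1) * (r / M) - 1 with hβdef
  clear_value β
  set B : ℝ := r - N + N * r / M with hBdef
  clear_value B
  have hBle : (1 - δ) * B ≤ r - N + ε / 4 := by
    have h1 : B ≤ r - N + ε / 8 := by rw [hBdef]; linarith
    have h2 : -B ≤ N := by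
      rw [hBdef]
      have h3 : (0:ℝ) ≤ N * r / M := by positivity
      linarith
    have h4 : δ * (-B) ≤ δ * N := mul_le_mul_of_nonneg_left h2 hδpos.le
    have h5 : (1 - δ) * B = B + δ * (-B) := by ring
    linarith
  set 𝒦 : Finset (Fin N → Fin (M + 1)) :=
    Finset.univ.filter (fun k => ∑ i, (k i : ℕ) ≤ M) with h𝒦def
  clear_value 𝒦
  set C : ℝ := (((M + 1) ^ N : ℕ) : ℝ) with hCdef
  clear_value C
  have hC1 : (1:ℝ) ≤ C := by
    rw [hCdef]
    exact_mod_cast Nat.one_le_pow _ _ (Nat.succ_pos M)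
  -- per-j eventual bound
  have hjev : ∀ j ∈ Finset.range (M + 1), ∀ᶠ ρ : ℝ in atTop,
      (μ {ω | X ⟨0, hN⟩ ω ≤ ρ ^ β j}).toReal ≤ ρ ^ ((1 - δ) * β j) := by
    intro j _
    rcases lt_or_ge (β j) 0 with hβj | hβj
    · have ht : Tendsto (fun ρ : ℝ => ρ ^ β j) atTop (nhds 0) := by
        have h := tendsto_rpow_neg_atTop (show (0:ℝ) < -β j by linarith)
        simpa using h
      filter_upwards [ht.eventually (eventually_lt_nhds hε₁pos),
        eventually_gt_atTop (0:ℝ)] with ρ hρε hρ0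
      have hx : 0 < ρ ^ β j := Real.rpow_pos_of_pos hρ0 _
      have h := (hFbound _ hx hρε).1
      calc (μ {ω | X ⟨0, hN⟩ ω ≤ ρ ^ β j}).toReal ≤ (ρ ^ β j) ^ (1 - δ) := h
        _ = ρ ^ ((1 - δ) * β j) := by
            rw [← Real.rpow_mul hρ0.le]
            congr 1
            ring
    · filter_upwards [eventually_ge_atTop (1:ℝ)] with ρ hρ1
      calc (μ {ω | X ⟨0, hN⟩ ω ≤ ρ ^ β j}).toReal ≤ 1 := hF1 _
        _ = ρ ^ (0:ℝ) := (Real.rpow_zero ρ).symm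
        _ ≤ ρ ^ ((1 - δ) * β j) :=
            Real.rpow_le_rpow_of_exponent_le hρ1
              (mul_nonneg (by linarith) hβj)
  have hjall : ∀ᶠ ρ : ℝ in atTop, ∀ j ∈ Finset.range (M + 1),
      (μ {ω | X ⟨0, hN⟩ ω ≤ ρ ^ β j}).toReal ≤ ρ ^ ((1 - δ) * β j) :=
    (eventually_all_finset _).mpr hjev
  -- the covering lemma
  have hcover : ∀ ρ : ℝ, 1 < ρ →
      {ω | ∑ i, Real.log (1 + ρ * X i ω) ≤ r * Real.log ρ} ⊆
        ⋃ k ∈ 𝒦, ⋂ i, {ω | X i ω ≤ ρ ^ β (k i)} := by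
    intro ρ hρ1 ω hω
    have hρ0 : (0:ℝ) < ρ := lt_trans one_pos hρ1
    have hT : 0 < r * Real.log ρ := mul_pos hr0 (Real.log_pos hρ1)
    simp only [Set.mem_setOf_eq] at hω
    have hY0 : ∀ i, 0 ≤ Real.log (1 + ρ * X i ω) := by
      intro i
      apply Real.log_nonneg
      nlinarith [hpos i ω]
    have hYle : ∀ i, Real.log (1 + ρ * X i ω) ≤ r * Real.log ρ := by
      intro i
      exact le_trans (Finset.single_le_sum (fun j _ => hY0 j) (Finset.mem_univ i)) hω
    set n : Fin N → ℕ :=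
      fun i => min M ⌊Real.log (1 + ρ * X i ω) * M / (r * Real.log ρ)⌋₊ with hndef
    have hnM : ∀ i, n i < M + 1 := fun i => Nat.lt_succ_of_le (min_le_left _ _)
    have hksum : ∑ i, n i ≤ M := by
      have hsumR : (∑ i, (n i : ℝ)) ≤ (M:ℝ) := by
        calc ∑ i, (n i : ℝ)
            ≤ ∑ i, Real.log (1 + ρ * X i ω) * M / (r * Real.log ρ) := by
              apply Finset.sum_le_sum
              intro i _
              calc (n i : ℝ) ≤ (⌊Real.log (1 + ρ * X i ω) * M / (r * Real.log ρ)⌋₊ : ℝ) := by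
                    exact_mod_cast min_le_right M _
                _ ≤ Real.log (1 + ρ * X i ω) * M / (r * Real.log ρ) :=
                    Nat.floor_le (div_nonneg (mul_nonneg (hY0 i) (by positivity)) hT.le)
          _ = (∑ i, Real.log (1 + ρ * X i ω)) * M / (r * Real.log ρ) := by
              rw [← Finset.sum_div, ← Finset.sum_mul]
          _ ≤ (r * Real.log ρ) * M / (r * Real.log ρ) := by gcongr
          _ = M := by field_simp [(Real.log_pos hρ1).ne']
      exact_mod_cast hsumR
    refine Set.mem_iUnion₂.mpr ⟨(fun i => (⟨n i, hnM i⟩ : Fin (M + 1))), ?_, ?_⟩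
    · rw [h𝒦def]
      refine Finset.mem_filter.mpr ⟨Finset.mem_univ _, ?_⟩
      simpa using hksum
    · simp only [Set.mem_iInter, Set.mem_setOf_eq]
      intro i
      show X i ω ≤ ρ ^ β (n i)
      have hYlt : Real.log (1 + ρ * X i ω) < ((n i : ℝ) + 1) * (r * Real.log ρ) / M := by
        rcases le_or_gt ⌊Real.log (1 + ρ * X i ω) * M / (r * Real.log ρ)⌋₊ M with hc | hc
        · have hni : n i = ⌊Real.log (1 + ρ * X i ω) * M / (r * Real.log ρ)⌋₊ :=
            min_eq_right hc
          have h1 : Real.log (1 + ρ * X i ω) * M / (r * Real.log ρ) <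
              (⌊Real.log (1 + ρ * X i ω) * M / (r * Real.log ρ)⌋₊ : ℝ) + 1 :=
            Nat.lt_floor_add_one _
          have h2 : Real.log (1 + ρ * X i ω) * M <
              ((⌊Real.log (1 + ρ * X i ω) * M / (r * Real.log ρ)⌋₊ : ℝ) + 1) *
                (r * Real.log ρ) := (div_lt_iff₀ hT).mp h1
          rw [hni, lt_div_iff₀ hMpos]
          linarith
        · have hni : n i = M := min_eq_left hc.le
          rw [hni, lt_div_iff₀ hMpos]
          have h3 : Real.log (1 + ρ * X i ω) * M ≤ (r * Real.log ρ) * M :=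
            mul_le_mul_of_nonneg_right (hYle i) hMpos.le
          nlinarith [hT]
      have h1ρX : (0:ℝ) < 1 + ρ * X i ω := by nlinarith [hpos i ω]
      have hβrel : (β (n i) + 1) * Real.log ρ = ((n i : ℝ) + 1) * (r * Real.log ρ) / M := by
        rw [hβdef]
        field_simp
        ring
      have hexp1 : 1 + ρ * X i ω < Real.exp (((n i : ℝ) + 1) * (r * Real.log ρ) / M) := by
        calc 1 + ρ * X i ω = Real.exp (Real.log (1 + ρ * X i ω)) :=
              (Real.exp_log h1ρX).symm
          _ < Real.exp (((n i : ℝ) + 1) * (r * Real.log ρ) / M) :=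
              Real.exp_lt_exp.mpr hYlt
      have hrpow : ρ ^ β (n i) = Real.exp (((n i : ℝ) + 1) * (r * Real.log ρ) / M) / ρ := by
        rw [Real.rpow_def_of_pos hρ0]
        have h : Real.log ρ * β (n i) = (β (n i) + 1) * Real.log ρ - Real.log ρ := by ring
        rw [h, Real.exp_sub, Real.exp_log hρ0, hβrel]
      rw [hrpow, le_div_iff₀ hρ0]
      nlinarith [hexp1, hpos i ω]
  -- eventual upper bound on the probability
  have hupev : ∀ᶠ ρ : ℝ in atTop,
      (μ {ω | ∑ i, Real.log (1 + ρ * X i ω) ≤ r * Real.log ρ}).toReal ≤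
        C * ρ ^ ((1 - δ) * B) := by
    filter_upwards [hjall, eventually_gt_atTop (1:ℝ)] with ρ hj hρ1
    have hρ0 : (0:ℝ) < ρ := lt_trans one_pos hρ1
    have h1 : μ {ω | ∑ i, Real.log (1 + ρ * X i ω) ≤ r * Real.log ρ} ≤
        ∑ k ∈ 𝒦, μ (⋂ i, {ω | X i ω ≤ ρ ^ β (k i)}) :=
      le_trans (measure_mono (hcover ρ hρ1)) (measure_biUnion_finset_le 𝒦 _)
    have h2 : (μ {ω | ∑ i, Real.log (1 + ρ * X i ω) ≤ r * Real.log ρ}).toReal ≤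
        ∑ k ∈ 𝒦, (μ (⋂ i, {ω | X i ω ≤ ρ ^ β (k i)})).toReal := by
      have h := ENNReal.toReal_mono
        (ENNReal.sum_lt_top.mpr (fun k _ => measure_lt_top μ _)).ne h1
      rwa [ENNReal.toReal_sum (fun k _ => measure_ne_top μ _)] at h
    have h3 : ∀ k ∈ 𝒦, (μ (⋂ i, {ω | X i ω ≤ ρ ^ β (k i)})).toReal ≤
        ρ ^ ((1 - δ) * B) := by
      intro k hk
      rw [hprod]
      have hks : (∑ i, ((k i : ℕ) : ℝ)) ≤ (M:ℝ) := by
        rw [h𝒦def] at hk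
        have h := (Finset.mem_filter.mp hk).2
        exact_mod_cast h
      have hsum_le : ∑ i, β (k i) ≤ B := by
        have hsum_eq : ∑ i, β ((k i : ℕ)) =
            ((∑ i, ((k i : ℕ) : ℝ)) + N) * (r / M) - N := by
          rw [hβdef]
          rw [Finset.sum_sub_distrib, ← Finset.sum_mul, Finset.sum_add_distrib,
            Finset.sum_const, Finset.card_univ, Fintype.card_fin]
          simp only [nsmul_eq_mul, mul_one]
        rw [hsum_eq, hBdef]
        have hrM : (0:ℝ) ≤ r / M := by positivity
        have hmm : ((∑ i, ((k i : ℕ) : ℝ)) + N) * (r / M) ≤ ((M:ℝ) + N) * (r / M) :=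
          mul_le_mul_of_nonneg_right (by linarith) hrM
        have hMrM : (M:ℝ) * (r / M) = r := by field_simp
        have hNrM : (N:ℝ) * (r / M) = N * r / M := by ring
        nlinarith
      calc ∏ i, (μ {ω | X ⟨0, hN⟩ ω ≤ ρ ^ β (k i)}).toReal
          ≤ ∏ i, ρ ^ ((1 - δ) * β (k i)) := by
            apply Finset.prod_le_prod
            · intro i _
              exact ENNReal.toReal_nonneg
            · intro i _
              exact hj _ (Finset.mem_range.mpr (k i).isLt)
        _ = ρ ^ ((1 - δ) * ∑ i, β (k i)) := by
            simp only [Real.rpow_def_of_pos hρ0]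
            rw [← Real.exp_sum]
            congr 1
            rw [Finset.mul_sum, Finset.mul_sum]
        _ ≤ ρ ^ ((1 - δ) * B) := by
            apply Real.rpow_le_rpow_of_exponent_le hρ1.le
            exact mul_le_mul_of_nonneg_left hsum_le (by linarith)
    calc (μ {ω | ∑ i, Real.log (1 + ρ * X i ω) ≤ r * Real.log ρ}).toReal
        ≤ ∑ k ∈ 𝒦, (μ (⋂ i, {ω | X i ω ≤ ρ ^ β (k i)})).toReal := h2
      _ ≤ ∑ _k ∈ 𝒦, ρ ^ ((1 - δ) * B) := Finset.sum_le_sum h3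
      _ = (𝒦.card : ℝ) * ρ ^ ((1 - δ) * B) := by
          rw [Finset.sum_const, nsmul_eq_mul]
      _ ≤ C * ρ ^ ((1 - δ) * B) := by
          apply mul_le_mul_of_nonneg_right _ (Real.rpow_nonneg hρ0.le _)
          rw [hCdef]
          have hcard : 𝒦.card ≤ (M + 1) ^ N := by
            calc 𝒦.card ≤ (Finset.univ : Finset (Fin N → Fin (M + 1))).card := by
                  rw [h𝒦def]
                  exact Finset.card_le_card (Finset.filter_subset _ _)
              _ = (M + 1) ^ N := by
                  simp [Finset.card_univ]
          exact_mod_cast hcard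
  -- constant term vanishes
  have hconst : Tendsto (fun ρ : ℝ => Real.log C / Real.log ρ) atTop (nhds 0) :=
    Tendsto.div_atTop tendsto_const_nhds Real.tendsto_log_atTop
  have hconstev : ∀ᶠ ρ : ℝ in atTop, Real.log C / Real.log ρ < ε / 4 :=
    hconst.eventually (eventually_lt_nhds (by positivity))
  ------------------------------------------------------------------
  -- COMBINE
  ------------------------------------------------------------------
  filter_upwards [hmain_low, hupev, hconstev, eventually_gt_atTop (1:ℝ)]
    with ρ hlo hup hc hρ1
  obtain ⟨hPpos, hglow⟩ := hlo
  have hlogρ : 0 < Real.log ρ := Real.log_pos hρ1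
  have hρ0 : (0:ℝ) < ρ := lt_trans one_pos hρ1
  have hgup : Real.log ((μ {ω | ∑ i, Real.log (1 + ρ * X i ω) ≤ r * Real.log ρ}).toReal)
      / Real.log ρ ≤ Real.log C / Real.log ρ + (1 - δ) * B := by
    have h1 : Real.log ((μ {ω | ∑ i, Real.log (1 + ρ * X i ω) ≤ r * Real.log ρ}).toReal)
        ≤ Real.log (C * ρ ^ ((1 - δ) * B)) := Real.log_le_log hPpos hup
    rw [Real.log_mul (by linarith : C ≠ 0) (ne_of_gt (Real.rpow_pos_of_pos hρ0 _)),
      Real.log_rpow hρ0] at h1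
    calc Real.log ((μ {ω | ∑ i, Real.log (1 + ρ * X i ω) ≤ r * Real.log ρ}).toReal)
          / Real.log ρ
        ≤ (Real.log C + (1 - δ) * B * Real.log ρ) / Real.log ρ :=
          (div_le_div_iff_of_pos_right hlogρ).mpr h1
      _ = Real.log C / Real.log ρ + (1 - δ) * B := by
          field_simp
  rw [Real.dist_eq, abs_lt]
  constructor
  · linarith [hgup, hc, hBle]
  · linarith [hglow]
end
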